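/- Let p be an odd prime, n ≥ 1, and α an integer with gcd(p,α) = 1. The polynomial f(x) = pⁿ + αx² is reducible in ℤ[[x]] if and only if n is even and −α is a quadratic residue modulo p. -/

import Mathlib

open PowerSeries

lemma aux_dvd_pp (p : ℕ) (hp : p.Prime) (n : ℕ) (a : ℤ) (h : a ∣ (p:ℤ)^n)
    (hu : ¬ IsUnit a) : (p:ℤ) ∣ a := by
  have hpz : Prime (p:ℤ) := Nat.prime_iff_prime_int.mp hp
  obtain ⟨i, hi, u, hu2⟩ := (dvd_prime_pow hpz n).mp h
  rcases Nat.eq_zero_or_pos i with h0 | h1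
  · subst h0
    simp only [pow_zero] at hu2
    exact absurd (IsUnit.of_mul_eq_one (a := a) u hu2) hu
  · have hdvd : (p:ℤ) ∣ a * u := by
      rw [hu2]
      exact dvd_pow_self _ (by omega)
    rcases hpz.dvd_mul.mp hdvd with h' | h'
    · exact h'
    · exact absurd (isUnit_of_dvd_unit h' u.isUnit) hpz.not_unit

lemma fwd (p : ℕ) (hp : p.Prime) (n : ℕ) (hn : 1 ≤ n) (α : ℤ)
    (hα : Int.gcd (p : ℤ) α = 1) (a b : PowerSeries ℤ)
    (hua : ¬ IsUnit a) (hub : ¬ IsUnit b)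
    (hab : (PowerSeries.C : ℤ →+* PowerSeries ℤ) ((p : ℤ) ^ n) + (PowerSeries.C : ℤ →+* PowerSeries ℤ) α * PowerSeries.X ^ 2 = a * b) :
    Even n ∧ IsSquare ((-α : ℤ) : ZMod p) := by
  set A0 := constantCoeff a with hA0d
  set A1 := coeff 1 a
  set A2 := coeff 2 a
  set B0 := constantCoeff b with hB0d
  set B1 := coeff 1 b
  set B2 := coeff 2 b
  have hc : ∀ k, ((if k = 0 then (p:ℤ)^n else 0) + α * (if k = 2 then 1 else 0))
      = coeff k (a * b) := by
    intro k
    rw [← hab]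
    simp only [map_add, coeff_C, coeff_C_mul, coeff_X_pow]
  have h0 : (p:ℤ)^n = A0 * B0 := by
    have := hc 0
    simpa [coeff_mul, Finset.Nat.sum_antidiagonal_eq_sum_range_succ_mk,
      Finset.sum_range_succ] using this
  have h1 : 0 = A0 * B1 + A1 * B0 := by
    have := hc 1
    simpa [coeff_mul, Finset.Nat.sum_antidiagonal_eq_sum_range_succ_mk,
      Finset.sum_range_succ] using this
  have h2 : α = A0 * B2 + A1 * B1 + A2 * B0 := by
    have := hc 2
    simp only [coeff_mul, Finset.Nat.sum_antidiagonal_eq_sum_range_succ_mk,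
      Finset.sum_range_succ] at this
    simp at this
    linarith
  have hpα : ¬ (p:ℤ) ∣ α := by
    intro hd
    have h' : (p:ℤ) ∣ Int.gcd (p:ℤ) α := Int.dvd_coe_gcd dvd_rfl hd
    rw [hα] at h'
    have := Int.le_of_dvd one_pos h'
    have := hp.two_le
    omega
  have huA0 : ¬ IsUnit A0 := fun h => hua (isUnit_iff_constantCoeff.mpr h)
  have huB0 : ¬ IsUnit B0 := fun h => hub (isUnit_iff_constantCoeff.mpr h)
  have hdA0 : (p:ℤ) ∣ A0 := aux_dvd_pp p hp n A0 ⟨B0, h0⟩ huA0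
  have hdB0 : (p:ℤ) ∣ B0 := aux_dvd_pp p hp n B0 ⟨A0, by rw [h0]; ring⟩ huB0
  -- key identity
  set T : ℤ := A0 * B2 + A2 * B0 - α with hT
  have key : (A0 * B1)^2 = (p:ℤ)^n * T := by
    have hd : A0 * B1 = -(A1 * B0) := by linarith
    calc (A0*B1)^2 = (A0*B1) * (-(A1*B0)) := by rw [← hd]; ring
    _ = -((A0*B0) * (A1*B1)) := by ring
    _ = -((p:ℤ)^n * (α - A0*B2 - A2*B0)) := by
          rw [← h0]
          have h3 : A1*B1 = α - A0*B2 - A2*B0 := by linarith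
          rw [h3]
    _ = (p:ℤ)^n * T := by rw [hT]; ring
  have hpT : ¬ (p:ℤ) ∣ T := by
    intro hd
    apply hpα
    have h1' : (p:ℤ) ∣ A0 * B2 + A2 * B0 := by
      exact dvd_add (Dvd.dvd.mul_right hdA0 _) (Dvd.dvd.mul_left hdB0 _)
    have : (p:ℤ) ∣ (A0 * B2 + A2 * B0) - T := dvd_sub h1' hd
    simpa [hT] using this
  -- endgame in ℕ
  set d := A0 * B1 with hdd
  set e := d.natAbs with he
  set t := T.natAbs with ht
  have het : e^2 = p^n * t := by
    have := congrArg Int.natAbs key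
    simpa [Int.natAbs_mul, Int.natAbs_pow] using this
  have hpt : ¬ p ∣ t := by
    intro hd
    exact hpT (Int.dvd_natAbs.mp (Int.natCast_dvd_natCast.mpr hd))
  have ht0 : t ≠ 0 := fun h => hpt (h ▸ dvd_zero p)
  have he0 : e ≠ 0 := by
    intro h
    rw [h] at het
    simp only [Nat.zero_pow, pow_succ] at het
    rcases Nat.mul_eq_zero.mp het.symm with h' | h'
    · exact pow_ne_zero n hp.pos.ne' h'
    · exact ht0 h'
  set k := e.factorization p with hk
  have hfac : 2 * k = n := by
    have h1 : (e^2).factorization p = 2 * k := by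
      rw [Nat.factorization_pow]; simp; rfl
    have h2 : (p^n * t).factorization p = n := by
      rw [Nat.factorization_mul (pow_ne_zero n hp.pos.ne') ht0]
      simp [hp.factorization_pow, Nat.factorization_eq_zero_of_not_dvd hpt]
    rw [het, h2] at h1
    omega
  obtain ⟨s, hs⟩ := Nat.ordProj_dvd e p
  have hts : t = s^2 := by
    have h3 : p^(2*k) * s^2 = p^n * t := by
      rw [← het, hs]; ring
    rw [← hfac] at h3
    exact (Nat.eq_of_mul_eq_mul_left (pow_pos hp.pos _) h3).symm
  refine ⟨⟨k, by omega⟩, ?_⟩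
  have hTpos : 0 ≤ T := by
    by_contra h
    push_neg at h
    have h1 : (p:ℤ)^n * T < 0 :=
      mul_neg_of_pos_of_neg (pow_pos (by exact_mod_cast hp.pos) n) h
    rw [← key] at h1
    exact absurd (sq_nonneg d) (by linarith)
  have hTt : T = (t:ℤ) := by rw [ht, Int.natAbs_of_nonneg hTpos]
  have hdvd2 : (p:ℤ) ∣ (s:ℤ)^2 + α := by
    have h1 : (p:ℤ) ∣ T + α := by
      have : T + α = A0 * B2 + A2 * B0 := by rw [hT]; ring
      rw [this]
      exact dvd_add (hdA0.mul_right _) (hdB0.mul_left _)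
    rwa [hTt, hts] at h1
    <;> push_cast
    <;> ring_nf
  have hzero : (((s:ℤ)^2 + α : ℤ) : ZMod p) = 0 :=
    (ZMod.intCast_zmod_eq_zero_iff_dvd _ p).mpr hdvd2
  refine ⟨(s : ZMod p), ?_⟩
  push_cast at hzero ⊢
  linear_combination -hzero

lemma padic_sqrt (p : ℕ) [hf : Fact p.Prime] (hodd : Odd p) (α : ℤ) (hpα : ¬(p:ℤ) ∣ α)
    (hsq : IsSquare ((-α : ℤ) : ZMod p)) :
    ∃ z : ℤ_[p], z * z = -(α : ℤ_[p]) ∧ ‖z‖ = 1 := by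
  have hp := hf.out
  obtain ⟨r, hr⟩ := hsq
  haveI : NeZero p := ⟨hp.pos.ne'⟩
  set s : ℤ := (r.val : ℤ) with hs
  have hdvd : (p:ℤ) ∣ s^2 + α := by
    have h1 : ((s^2 + α : ℤ) : ZMod p) = 0 := by
      push_cast at hr ⊢
      rw [hs]
      push_cast [ZMod.natCast_val, ZMod.cast_id]
      linear_combination -hr
    exact (ZMod.intCast_zmod_eq_zero_iff_dvd _ p).mp h1
  have hps : ¬ (p:ℤ) ∣ s := by
    intro hd
    apply hpα
    have h2 : (p:ℤ) ∣ s^2 := by rw [sq]; exact hd.mul_right s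
    have := dvd_sub hdvd h2
    simpa using this
  have hp2 : ¬ (p:ℤ) ∣ 2 := by
    intro hd
    have hd' : p ∣ 2 := by exact_mod_cast hd
    have h1 := Nat.le_of_dvd (by norm_num) hd'
    have h2 := hp.two_le
    obtain ⟨j, hj⟩ := hodd
    omega
  -- Hensel setup
  set F : Polynomial ℤ_[p] := Polynomial.X^2 + Polynomial.C ((α : ℤ) : ℤ_[p]) with hF
  set a : ℤ_[p] := ((s : ℤ) : ℤ_[p]) with ha
  have heval : F.eval a = ((s^2 + α : ℤ) : ℤ_[p]) := by
    simp [hF, ha]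
  have hnorm_eval : ‖F.eval a‖ < 1 := by
    rw [heval]
    exact (PadicInt.norm_int_lt_one_iff_dvd _).mpr hdvd
  have hderiv : F.derivative = Polynomial.C 2 * Polynomial.X := by
    simp [hF]
    rw [one_add_one_eq_two]; exact (map_ofNat Polynomial.C 2).symm
  have hderiv_eval : F.derivative.eval a = 2 * a := by rw [hderiv]; simp
  have hna : ‖a‖ = 1 := by
    rw [ha]
    refine le_antisymm (PadicInt.norm_le_one _) ?_
    by_contra h
    push_neg at h
    exact hps ((PadicInt.norm_int_lt_one_iff_dvd _).mp h)
  have hn2 : ‖(2 : ℤ_[p])‖ = 1 := by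
    have : ((2:ℤ) : ℤ_[p]) = (2 : ℤ_[p]) := by push_cast; ring
    rw [← this]
    refine le_antisymm (PadicInt.norm_le_one _) ?_
    by_contra h
    push_neg at h
    exact hp2 ((PadicInt.norm_int_lt_one_iff_dvd _).mp h)
  have hnd : ‖F.derivative.eval a‖ = 1 := by
    rw [hderiv_eval, norm_mul, hn2, hna, one_mul]
  obtain ⟨z, hz1, _, hz3, _⟩ := hensels_lemma (F := F) (a := a)
    (by simp only [Polynomial.coe_aeval_eq_eval]; rw [hnd]; simpa using hnorm_eval)
  refine ⟨z, ?_, ?_⟩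
  · have : z^2 + ((α:ℤ) : ℤ_[p]) = 0 := by simpa [hF] using hz1
    push_cast at this ⊢
    linear_combination this
  · have hde : F.derivative.eval z = 2 * z := by rw [hderiv]; simp
    simp only [Polynomial.coe_aeval_eq_eval] at hz3; rw [hde, hnd, norm_mul, hn2, one_mul] at hz3
    exact hz3

lemma bwd (p : ℕ) [hf : Fact p.Prime] (hodd : Odd p) (m : ℕ) (hm : 1 ≤ m) (α : ℤ)
    (hpα : ¬ (p:ℤ) ∣ α) (hsq : IsSquare ((-α : ℤ) : ZMod p)) :
    ∃ a b : PowerSeries ℤ, ¬ IsUnit a ∧ ¬ IsUnit b ∧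
      (PowerSeries.C : ℤ →+* PowerSeries ℤ) ((p:ℤ)^(m+m)) + (PowerSeries.C : ℤ →+* PowerSeries ℤ) α * PowerSeries.X^2 = a * b := by
  classical
  have hp := hf.out
  obtain ⟨z, hz, hnz⟩ := padic_sqrt p hodd α hpα hsq
  have huz : IsUnit z := PadicInt.isUnit_iff.mpr hnz
  have hzne : z ≠ 0 := huz.ne_zero
  set v : ℤ_[p] := ((huz.unit⁻¹ : ℤ_[p]ˣ) : ℤ_[p]) with hv
  have hvz : v * z = 1 := by
    rw [hv]
    nth_rewrite 2 [← huz.unit_spec]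
    exact_mod_cast huz.unit.inv_mul
  set c : ℤ_[p] := (p:ℤ_[p])^m * v with hc
  have hcz : c * z = (p:ℤ_[p])^m := by rw [hc, mul_assoc, hvz, mul_one]
  have hαc : (α : ℤ_[p]) * (c * c) = -((p:ℤ_[p])^(m+m)) := by
    apply mul_right_cancel₀ (mul_ne_zero hzne hzne)
    have l1 : (α:ℤ_[p]) * (c * c) * (z * z) = (α:ℤ_[p]) * ((c*z) * (c*z)) := by ring
    rw [l1, hcz, hz]
    ring
  -- recursion
  have hstep : ∀ x : ℤ_[p], ∃ y : ℤ_[p], x - ((x.appr m : ℕ) : ℤ_[p]) = c * y := by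
    intro x
    have h := PadicInt.appr_spec m x
    rw [Ideal.mem_span_singleton] at h
    obtain ⟨y', hy'⟩ := h
    exact ⟨z * y', by rw [hy', ← hcz]; ring⟩
  set W : ℕ → ℤ_[p] := fun k => Nat.rec (-z) (fun _ w => Classical.choose (hstep w)) k with hWdef
  have hW0 : W 0 = -z := rfl
  have hWs : ∀ k, W k - ((((W k).appr m) : ℕ) : ℤ_[p]) = c * W (k+1) := fun k =>
    Classical.choose_spec (hstep (W k))
  set aseq : ℕ → ℤ := fun k => Nat.casesOn k ((p:ℤ)^m) (fun j => (((W j).appr m : ℕ) : ℤ))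
    with haseq
  set ρ : ℤ →+* ℤ_[p] := Int.castRingHom ℤ_[p] with hρ
  set A : PowerSeries ℤ := PowerSeries.mk aseq with hA
  set Wps : PowerSeries ℤ_[p] := PowerSeries.mk W with hWps
  have hmapA : PowerSeries.map ρ A = (X - PowerSeries.C c) * Wps := by
    ext k
    rw [PowerSeries.coeff_map]
    cases k with
    | zero =>
      have e1 : (coeff 0) ((X - PowerSeries.C c) * Wps) = c * z := by
        rw [coeff_zero_eq_constantCoeff, map_mul, map_sub, constantCoeff_X, constantCoeff_C,
          hWps, constantCoeff_mk, hW0]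
        ring
      rw [e1, hcz]
      simp only [hA, coeff_mk, haseq, eq_intCast]
      show (((p:ℤ)^m : ℤ) : ℤ_[p]) = (p:ℤ_[p])^m
      push_cast
      ring
    | succ j =>
      rw [sub_mul, map_sub, coeff_succ_X_mul, coeff_C_mul]
      simp only [hWps, coeff_mk, hA]
      have h := hWs j
      rw [← h]
      simp only [haseq, eq_intCast]
      push_cast
      ring
  have hWu : IsUnit (constantCoeff Wps) := by
    rw [hWps, constantCoeff_mk, hW0]
    exact huz.neg
  set V : PowerSeries ℤ_[p] := PowerSeries.invOfUnit Wps hWu.unit with hV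
  have hWV : Wps * V = 1 := PowerSeries.mul_invOfUnit Wps hWu.unit hWu.unit_spec.symm
  set B : PowerSeries ℤ_[p] :=
    PowerSeries.C (α : ℤ_[p]) * ((X + PowerSeries.C c) * V) with hB
  have hprod : PowerSeries.map ρ A * B
      = PowerSeries.map ρ ((PowerSeries.C : ℤ →+* PowerSeries ℤ) ((p:ℤ)^(m+m)) + (PowerSeries.C : ℤ →+* PowerSeries ℤ) α * X^2) := by
    rw [hmapA, hB]
    have l1 : (X - PowerSeries.C c) * Wps
        * (PowerSeries.C (α : ℤ_[p]) * ((X + PowerSeries.C c) * V))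
        = PowerSeries.C (α : ℤ_[p]) * (X^2 - PowerSeries.C c * PowerSeries.C c)
          * (Wps * V) := by ring
    rw [l1, hWV, mul_one, ← map_mul, mul_sub, ← map_mul, hαc]
    simp only [map_add, map_mul, map_pow, map_neg, PowerSeries.map_C, PowerSeries.map_X,
      eq_intCast, map_intCast, map_natCast]
    push_cast
    ring
  set fps : PowerSeries ℤ :=
    (PowerSeries.C : ℤ →+* PowerSeries ℤ) ((p:ℤ)^(m+m)) + (PowerSeries.C : ℤ →+* PowerSeries ℤ) α * X^2 with hfps
  have hpm_ne : ((p:ℤ_[p]))^m ≠ 0 := pow_ne_zero m (by exact_mod_cast hp.pos.ne')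
  have hint : ∀ k, ∃ bk : ℤ, (coeff k) B = ((bk : ℤ) : ℤ_[p]) := by
    intro k
    induction k using Nat.strong_induction_on with
    | _ k IH =>
      have hco := congrArg (coeff k) hprod
      rw [coeff_mul, Finset.Nat.sum_antidiagonal_eq_sum_range_succ_mk,
        Finset.sum_range_succ'] at hco
      set g : ℕ → ℤ := fun i =>
        if h : i < k then aseq (i+1) * Classical.choose (IH (k-(i+1)) (by omega)) else 0 with hg
      have hsum : ∑ i ∈ Finset.range k,
          (coeff (i+1)) (PowerSeries.map ρ A) * (coeff (k-(i+1))) B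
          = ((∑ i ∈ Finset.range k, g i : ℤ) : ℤ_[p]) := by
        push_cast
        refine Finset.sum_congr rfl ?_
        intro i hi
        have hik := Finset.mem_range.mp hi
        rw [PowerSeries.coeff_map]
        rw [Classical.choose_spec (IH (k-(i+1)) (by omega))]
        simp only [hg, dif_pos hik, hA, coeff_mk, eq_intCast]
        push_cast
        ring
      have h0A : (coeff 0) (PowerSeries.map ρ A) = ((p:ℤ_[p]))^m := by
        rw [PowerSeries.coeff_map]
        simp only [hA, coeff_mk, haseq, eq_intCast]
        show (((p:ℤ)^m : ℤ) : ℤ_[p]) = (p:ℤ_[p])^m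
        push_cast; ring
      set N : ℤ := coeff k fps with hN
      have hfmap : (coeff k) (PowerSeries.map ρ fps) = ((N:ℤ) : ℤ_[p]) := by
        rw [PowerSeries.coeff_map]
        simp [eq_intCast]; rfl
      have hkey : ((p:ℤ_[p]))^m * (coeff k) B
          = ((N - ∑ i ∈ Finset.range k, g i : ℤ) : ℤ_[p]) := by
        have hco' : ((∑ i ∈ Finset.range k, g i : ℤ) : ℤ_[p])
            + ((p:ℤ_[p]))^m * (coeff k) B = ((N:ℤ) : ℤ_[p]) := by
          rw [← hsum, ← h0A, ← hfmap, ← hco]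
          simp
        push_cast at hco' ⊢
        linear_combination hco'
      have hnorm : ‖(((N - ∑ i ∈ Finset.range k, g i : ℤ)) : ℤ_[p])‖ ≤ (p:ℝ)^(-(m:ℤ)) := by
        rw [← hkey, norm_mul, PadicInt.norm_p_pow]
        exact mul_le_of_le_one_right (by positivity) (PadicInt.norm_le_one _)
      obtain ⟨bk, hbk⟩ := PadicInt.norm_int_le_pow_iff_dvd.mp hnorm
      refine ⟨bk, ?_⟩
      apply mul_left_cancel₀ hpm_ne
      rw [hkey, hbk]
      push_cast
      ring
  choose bseq hbseq using hint
  set b : PowerSeries ℤ := PowerSeries.mk bseq with hb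
  have hmapb : PowerSeries.map ρ b = B := by
    ext k
    rw [PowerSeries.coeff_map]
    simp only [hb, coeff_mk, eq_intCast]
    exact (hbseq k).symm
  have hinj : Function.Injective (PowerSeries.map ρ : PowerSeries ℤ → PowerSeries ℤ_[p]) := by
    intro x y h
    ext k
    have h2 := congrArg (coeff k) h
    rw [PowerSeries.coeff_map, PowerSeries.coeff_map] at h2
    simp only [eq_intCast] at h2
    exact_mod_cast h2
  have heq : fps = A * b := by
    apply hinj
    rw [map_mul, hmapb, hprod]
  have hple : (2:ℤ) ≤ (p:ℤ)^m := by
    have h1 : 2 ≤ p^m := le_trans hp.two_le (Nat.le_self_pow (by omega) p)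
    exact_mod_cast h1
  have hA0val : constantCoeff A = (p:ℤ)^m := by simp [hA, haseq]
  have hAnu : ¬ IsUnit A := by
    intro h
    have h2 := isUnit_constantCoeff A h
    rw [hA0val] at h2
    rcases Int.isUnit_iff.mp h2 with h' | h' <;> omega
  have hbnu : ¬ IsUnit b := by
    intro h
    have h2 := isUnit_constantCoeff b h
    have h3 := congrArg (constantCoeff) heq
    rw [map_mul, hA0val] at h3
    have h4 : constantCoeff fps = (p:ℤ)^(m+m) := by simp [hfps]
    rw [h4, pow_add] at h3
    have h5 : constantCoeff b = (p:ℤ)^m :=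
      (mul_left_cancel₀ (by intro hz; rw [hz] at hple; omega) h3).symm
    rw [h5] at h2
    rcases Int.isUnit_iff.mp h2 with h' | h' <;> omega
  exact ⟨A, b, hAnu, hbnu, heq⟩

theorem stmt_15 (p : ℕ) (hp : p.Prime) (hodd : Odd p) (n : ℕ) (hn : 1 ≤ n) (α : ℤ)
    (hα : Int.gcd (p : ℤ) α = 1) :
    (∃ a b : PowerSeries ℤ, ¬ IsUnit a ∧ ¬ IsUnit b ∧
      (PowerSeries.C : ℤ →+* PowerSeries ℤ) ((p : ℤ) ^ n) + (PowerSeries.C : ℤ →+* PowerSeries ℤ) α * PowerSeries.X ^ 2 = a * b) ↔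
    Even n ∧ IsSquare ((-α : ℤ) : ZMod p) := by
  constructor
  · rintro ⟨a, b, hua, hub, hab⟩
    exact fwd p hp n hn α hα a b hua hub hab
  · rintro ⟨heven, hsq⟩
    haveI : Fact p.Prime := ⟨hp⟩
    obtain ⟨m, hmn⟩ := heven
    have hm : 1 ≤ m := by omega
    have hpα : ¬ (p:ℤ) ∣ α := by
      intro hd
      have h' : (p:ℤ) ∣ Int.gcd (p:ℤ) α := Int.dvd_coe_gcd dvd_rfl hd
      rw [hα] at h'
      have := Int.le_of_dvd one_pos h'
      have := hp.two_le
      omega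
    obtain ⟨a, b, h1, h2, h3⟩ := bwd p hodd m hm α hpα hsq
    exact ⟨a, b, h1, h2, by rw [hmn]; exact h3⟩
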